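/- Let G = (V, X) be a chordal graph whose vertex set V admits a well-ordering. Then there is a linear ordering < of V such that for each v ∈ V the set {w : w < v and {w,v} ∈ X} is a clique. -/

import Mathlib

/-- `G` is chordal: every cycle with at least four vertices has a chord, i.e. an edge
joining two non-consecutive vertices of the cycle. -/
def Chordal {V : Type} (G : SimpleGraph V) : Prop :=
  ∀ n : ℕ, 4 ≤ n → ∀ f : ZMod n → V, Function.Injective f →
    (∀ i : ZMod n, G.Adj (f i) (f (i + 1))) →
    ∃ i j : ZMod n, j ≠ i + 1 ∧ i ≠ j + 1 ∧ i ≠ j ∧ G.Adj (f i) (f j)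

namespace Chd
open List

variable {V : Type} {G : SimpleGraph V}

lemma chord_of_cycle (hch : Chordal G) (c : List V)
    (hlen : 4 ≤ c.length) (hnd : c.Nodup) (hchain : c.IsChain G.Adj)
    (hcyc : G.Adj (c.getLast (by rintro rfl; simp at hlen)) (c.head (by rintro rfl; simp at hlen))) :
    ∃ p q : ℕ, ∃ (hq : q < c.length) (hpq : p < q), q ≠ p + 1 ∧
      ¬(p = 0 ∧ q = c.length - 1) ∧ G.Adj (c.get ⟨p, hpq.trans hq⟩) (c.get ⟨q, hq⟩) := by
  set n := c.length with hn
  haveI : NeZero n := ⟨by omega⟩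
  haveI : Fact (1 < n) := ⟨by omega⟩
  have hvadd1 : ∀ i : ZMod n, (i + 1).val = (i.val + 1) % n := by
    intro i
    rw [ZMod.val_add, ZMod.val_one]
  have hvalinj : ∀ i j : ZMod n, i.val = j.val → i = j := by
    intro i j h
    have := ZMod.val_cast_of_lt (a := i.val) (show i.val < n from i.val_lt)
    have h2 := ZMod.val_cast_of_lt (a := j.val) (show j.val < n from j.val_lt)
    calc i = ((i.val : ℕ) : ZMod n) := by rw [ZMod.natCast_val, ZMod.cast_id]
    _ = ((j.val : ℕ) : ZMod n) := by rw [h]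
    _ = j := by rw [ZMod.natCast_val, ZMod.cast_id]
  set f : ZMod n → V := fun i => c.get ⟨i.val, i.val_lt⟩ with hf
  have hinj : Function.Injective f := by
    intro i j h
    exact hvalinj i j ((hnd.getElem_inj_iff).1 h)
  have hne : c ≠ [] := List.length_pos_iff.mp (by omega)
  have hstep : ∀ (k : ℕ) (h : k < n - 1), G.Adj (c.get ⟨k, by omega⟩) (c.get ⟨k+1, by omega⟩) :=
    fun k h => List.isChain_iff_getElem.1 hchain k (by omega)
  have hwrap : G.Adj (c.get ⟨n-1, by omega⟩) (c.get ⟨0, by omega⟩) := by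
    rw [List.getLast_eq_getElem hne, List.head_eq_getElem hne] at hcyc
    exact hcyc
  have hadj : ∀ i : ZMod n, G.Adj (f i) (f (i + 1)) := by
    intro i
    have hi := i.val_lt
    simp only [hf]
    rcases Nat.lt_or_ge (i.val + 1) n with h | h
    · have h2 : (i + 1).val = i.val + 1 := by rw [hvadd1, Nat.mod_eq_of_lt h]
      simp only [h2]
      exact hstep i.val (by omega)
    · have hiv : i.val = n - 1 := by omega
      have h1 : (i + 1).val = 0 := by
        rw [hvadd1, show i.val + 1 = n by omega]; exact Nat.mod_self n
      simp only [h1, hiv]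
      exact hwrap
  obtain ⟨i, j, hj1, hi1, hij, hadjij⟩ := hch n hlen f hinj hadj
  have hjv := j.val_lt
  have hiv := i.val_lt
  rcases lt_trichotomy i.val j.val with hlt | heq | hlt
  · refine ⟨i.val, j.val, j.val_lt, hlt, ?_, ?_, hadjij⟩
    · intro h
      apply hj1
      apply hvalinj
      rw [hvadd1, h]
      exact (Nat.mod_eq_of_lt (by omega)).symm
    · rintro ⟨h0, hl⟩
      apply hi1
      apply hvalinj
      rw [hvadd1, hl, h0]
      have : n - 1 + 1 = n := by omega
      rw [this, Nat.mod_self]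
  · exact absurd (hvalinj i j heq) hij
  · refine ⟨j.val, i.val, i.val_lt, hlt, ?_, ?_, hadjij.symm⟩
    · intro h
      apply hi1
      apply hvalinj
      rw [hvadd1, h]
      exact (Nat.mod_eq_of_lt (by omega)).symm
    · rintro ⟨h0, hl⟩
      apply hj1
      apply hvalinj
      rw [hvadd1, hl, h0]
      have : n - 1 + 1 = n := by omega
      rw [this, Nat.mod_self]

end Chd

namespace Chd
open List

variable {V : Type} {G : SimpleGraph V}

def Walk' (G : SimpleGraph V) (x y : V) (l : List V) : Prop :=
  l.IsChain G.Adj ∧ l.head? = some x ∧ l.getLast? = some y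

lemma Walk'.ne_nil {x y : V} {l : List V} (h : Walk' G x y l) : l ≠ [] := by
  rintro rfl; simp [Walk'] at h

lemma Walk'.head_mem {x y : V} {l : List V} (h : Walk' G x y l) : x ∈ l := by
  have h1 := h.2.1
  rw [List.head?_eq_head h.ne_nil] at h1
  rw [← Option.some.inj h1]
  exact List.head_mem _

lemma Walk'.last_mem {x y : V} {l : List V} (h : Walk' G x y l) : y ∈ l := by
  have h1 := h.2.2
  rw [List.getLast?_eq_getLast h.ne_nil] at h1
  rw [← Option.some.inj h1]
  exact List.getLast_mem _

lemma Walk'.single (x : V) : Walk' G x x [x] :=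
  ⟨List.isChain_singleton x, rfl, rfl⟩

lemma Walk'.rev {x y : V} {l : List V} (h : Walk' G x y l) : Walk' G y x l.reverse := by
  refine ⟨?_, ?_, ?_⟩
  · rw [List.isChain_reverse]
    exact h.1.imp (fun a b hab => hab.symm)
  · rw [List.head?_reverse]; exact h.2.2
  · rw [List.getLast?_reverse]; exact h.2.1

lemma Walk'.join {x y v : V} {l₁ l₂ : List V} (h₁ : Walk' G x v l₁) (h₂ : Walk' G v y l₂) :
    Walk' G x y (l₁ ++ l₂.tail) ∧ ∀ w ∈ l₁ ++ l₂.tail, w ∈ l₁ ∨ w ∈ l₂ := by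
  obtain ⟨t, rfl⟩ : ∃ t, l₂ = v :: t := by
    cases l₂ with
    | nil => exact absurd h₂.2.1 (by simp)
    | cons a t =>
      have hav : a = v := by simpa using h₂.2.1
      exact ⟨t, by rw [hav]⟩
  constructor
  · refine ⟨?_, ?_, ?_⟩
    · refine List.isChain_append.2 ⟨h₁.1, (List.isChain_cons.1 h₂.1).2, ?_⟩
      intro p hp q hq
      have hp' : p = v := by
        have h2 := h₁.2.2; rw [h2] at hp; exact (by simpa using hp : v = p).symm
      subst hp'
      exact (List.isChain_cons.1 h₂.1).1 q hq
    · rw [List.head?_append_of_ne_nil _ h₁.ne_nil]; exact h₁.2.1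
    · cases t with
      | nil =>
        simp only [List.tail_cons, List.append_nil]
        have : v = y := by simpa using h₂.2.2
        rw [← this]; exact h₁.2.2
      | cons b t' =>
        rw [List.tail_cons, List.getLast?_append_of_ne_nil _ (by simp)]
        simpa using h₂.2.2
  · intro w hw
    rcases List.mem_append.1 hw with h | h
    · exact Or.inl h
    · exact Or.inr (List.mem_cons_of_mem _ (by simpa using h))

lemma Walk'.split {x y v : V} {l : List V} (h : Walk' G x y l) (hv : v ∈ l) :
    ∃ l₁ l₂, l = l₁ ++ v :: l₂ ∧ v ∉ l₁ ∧ Walk' G x v (l₁ ++ [v]) ∧ Walk' G v y (v :: l₂) := by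
  obtain ⟨l₁, l₂, rfl, hnot⟩ := List.eq_append_cons_of_mem hv
  refine ⟨l₁, l₂, rfl, hnot, ⟨?_, ?_, ?_⟩, ⟨?_, ?_, ?_⟩⟩
  · exact h.1.prefix ⟨l₂, by simp⟩
  · cases l₁ with
    | nil =>
      have : x = v := by simpa using h.2.1.symm
      simp [this]
    | cons a t =>
      have hh := h.2.1
      rw [List.head?_append_of_ne_nil _ (List.cons_ne_nil a t)] at hh
      rw [List.head?_append_of_ne_nil _ (List.cons_ne_nil a t)]
      exact hh
  · rw [List.getLast?_append_of_ne_nil _ (by simp)]; simp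
  · exact h.1.suffix ⟨l₁, rfl⟩
  · simp
  · have hh := h.2.2
    rw [List.getLast?_append_of_ne_nil _ (List.cons_ne_nil v l₂)] at hh
    exact hh

end Chd

namespace Chd
open List

variable {V : Type} {G : SimpleGraph V}

lemma head?_eq_get {l : List V} (h : 0 < l.length) : l.head? = some (l.get ⟨0, h⟩) := by
  rw [List.head?_eq_head (List.length_pos_iff.mp h)]
  congr 1
  rw [List.head_eq_getElem]
  simp [List.get_eq_getElem]

lemma getLast?_eq_get {l : List V} (h : 0 < l.length) :
    l.getLast? = some (l.get ⟨l.length - 1, by omega⟩) := by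
  rw [List.getLast?_eq_getLast (List.length_pos_iff.mp h)]
  congr 1
  rw [List.getLast_eq_getElem]
  simp [List.get_eq_getElem]

lemma shortcut_sub {l : List V} {i j : ℕ} (hij : i ≤ j) (hj : j ≤ l.length) :
    (l.take i ++ l.drop j).Sublist l := by
  have h1 : l.drop j = (l.drop i).drop (j - i) := by
    rw [List.drop_drop]; congr 1; omega
  have h2 : (l.take i ++ l.drop j).Sublist (l.take i ++ l.drop i) := by
    apply List.Sublist.append_left
    rw [h1]; exact List.drop_sublist _ _
  rw [List.take_append_drop] at h2
  exact h2

lemma shortcut_adj {x y : V} {l : List V} (h : Walk' G x y l) (i j : ℕ) (hj : j < l.length)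
    (hij : i + 1 < j) (hadj : G.Adj (l.get ⟨i, by omega⟩) (l.get ⟨j, hj⟩)) :
    ∃ l', Walk' G x y l' ∧ l'.Sublist l ∧ l'.length < l.length := by
  refine ⟨l.take (i+1) ++ l.drop j, ⟨?_, ?_, ?_⟩, shortcut_sub (by omega) (by omega), ?_⟩
  · refine List.isChain_append.2 ⟨h.1.prefix (List.take_prefix _ _), h.1.suffix (List.drop_suffix _ _), ?_⟩
    intro a ha b hb
    rw [List.getLast?_take] at ha
    rw [List.head?_drop] at hb
    simp only [Nat.add_eq_zero, if_neg (by omega : ¬ (i+1 = 0)), Nat.add_sub_cancel,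
      List.getElem?_eq_getElem (show i < l.length by omega), Option.or] at ha
    rw [List.getElem?_eq_getElem hj] at hb
    have ha' : a = l.get ⟨i, by omega⟩ := by simpa [List.get_eq_getElem] using ha.symm
    have hb' : b = l.get ⟨j, hj⟩ := by simpa [List.get_eq_getElem] using hb.symm
    rw [ha', hb']; exact hadj
  · rw [List.head?_append_of_ne_nil _ (List.length_pos_iff.mp (by
      rw [List.length_take]; exact lt_min (by omega) (by omega)))]
    rw [List.head?_take, if_neg (by omega : ¬ (i+1 = 0))]
    exact h.2.1
  · rw [List.getLast?_append_of_ne_nil _ (by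
      exact List.length_pos_iff.mp (by rw [List.length_drop]; omega))]
    rw [List.getLast?_drop, if_neg (by omega : ¬ (l.length ≤ j))]
    exact h.2.2
  · rw [List.length_append, List.length_take, List.length_drop]
    have : (i+1) ⊓ l.length = i + 1 := min_eq_left (by omega)
    omega

lemma shortcut_dup {x y : V} {l : List V} (h : Walk' G x y l) (i j : ℕ) (hj : j < l.length)
    (hij : i < j) (heq : l.get ⟨i, by omega⟩ = l.get ⟨j, hj⟩) :
    ∃ l', Walk' G x y l' ∧ l'.Sublist l ∧ l'.length < l.length := by
  refine ⟨l.take i ++ l.drop j, ⟨?_, ?_, ?_⟩, shortcut_sub (by omega) (by omega), ?_⟩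
  · refine List.isChain_append.2 ⟨h.1.prefix (List.take_prefix _ _), h.1.suffix (List.drop_suffix _ _), ?_⟩
    intro a ha b hb
    rw [List.getLast?_take] at ha
    have hi0 : i ≠ 0 := by
      rintro rfl; simp at ha
    rw [List.head?_drop, List.getElem?_eq_getElem hj] at hb
    simp only [if_neg hi0, List.getElem?_eq_getElem (show i - 1 < l.length by omega),
      Option.or] at ha
    have ha' : a = l.get ⟨i - 1, by omega⟩ := by simpa [List.get_eq_getElem] using ha.symm
    have hb' : b = l.get ⟨j, hj⟩ := by simpa [List.get_eq_getElem] using hb.symm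
    rw [ha', hb', ← heq]
    have hstep := List.isChain_iff_getElem.1 h.1 (i - 1) (by omega)
    have hi' : i - 1 + 1 = i := by omega
    simp only [hi'] at hstep
    exact hstep
  · rcases Nat.eq_zero_or_pos i with rfl | hi0
    · simp only [List.take_zero, List.nil_append]
      rw [List.head?_drop, List.getElem?_eq_getElem hj]
      have h0 := head?_eq_get (show 0 < l.length by omega)
      have hx : l.get ⟨j, hj⟩ = x := by
        rw [← heq]; exact Option.some.inj (h0.symm.trans h.2.1)
      simpa [List.get_eq_getElem] using congrArg some hx
    · rw [List.head?_append_of_ne_nil _ (List.length_pos_iff.mp (by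
        rw [List.length_take]; exact lt_min (by omega) (by omega)))]
      rw [List.head?_take, if_neg (by omega : ¬ (i = 0))]
      exact h.2.1
  · rw [List.getLast?_append_of_ne_nil _ (by
      exact List.length_pos_iff.mp (by rw [List.length_drop]; omega))]
    rw [List.getLast?_drop, if_neg (by omega : ¬ (l.length ≤ j))]
    exact h.2.2
  · rw [List.length_append, List.length_take, List.length_drop]
    have : i ⊓ l.length = i := min_eq_left (by omega)
    omega

end Chd

namespace Chd
open List

variable {V : Type} {G : SimpleGraph V}

lemma exists_chordless_path {x y : V} {A : Set V} (hxy : x ≠ y) (hnadj : ¬ G.Adj x y)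
    {l₀ : List V} (hw : Walk' G x y l₀) (hA : ∀ v ∈ l₀, v ≠ x → v ≠ y → v ∈ A) :
    ∃ l : List V, Walk' G x y l ∧ l.Nodup ∧ (∀ v ∈ l, v ≠ x → v ≠ y → v ∈ A) ∧ 3 ≤ l.length ∧
      ∀ p q : ℕ, ∀ (hq : q < l.length) (hpq : p < q), q ≠ p + 1 →
        ¬(p = 0 ∧ q = l.length - 1) → ¬ G.Adj (l.get ⟨p, hpq.trans hq⟩) (l.get ⟨q, hq⟩) := by
  suffices H : ∀ N : ℕ, ∀ l : List V, l.length ≤ N → Walk' G x y l →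
      (∀ v ∈ l, v ≠ x → v ≠ y → v ∈ A) →
      ∃ l : List V, Walk' G x y l ∧ l.Nodup ∧ (∀ v ∈ l, v ≠ x → v ≠ y → v ∈ A) ∧ 3 ≤ l.length ∧
      ∀ p q : ℕ, ∀ (hq : q < l.length) (hpq : p < q), q ≠ p + 1 →
        ¬(p = 0 ∧ q = l.length - 1) → ¬ G.Adj (l.get ⟨p, hpq.trans hq⟩) (l.get ⟨q, hq⟩) by
    exact H l₀.length l₀ le_rfl hw hA
  intro N
  induction N with
  | zero =>
    intro l hl hwl _
    exact absurd (List.length_eq_zero_iff.mp (by omega)) hwl.ne_nil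
  | succ N ih =>
    intro l hl hwl hAl
    by_cases hnd : l.Nodup
    · by_cases hch : ∃ p q : ℕ, ∃ (hq : q < l.length) (hpq : p < q),
        (q ≠ p + 1 ∧ ¬(p = 0 ∧ q = l.length - 1)) ∧
          G.Adj (l.get ⟨p, hpq.trans hq⟩) (l.get ⟨q, hq⟩)
      · obtain ⟨p, q, hq, hpq, ⟨h1, _⟩, hadj⟩ := hch
        obtain ⟨l', hwl', hsub, hlen⟩ := shortcut_adj hwl p q hq (by omega) hadj
        exact ih l' (by omega) hwl' (fun v hv => hAl v (hsub.subset hv))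
      · -- l itself works
        have h0 : 0 < l.length := List.length_pos_iff.mpr hwl.ne_nil
        have hx0 : l.get ⟨0, h0⟩ = x :=
          Option.some.inj ((head?_eq_get h0).symm.trans hwl.2.1)
        have hyl : l.get ⟨l.length - 1, by omega⟩ = y :=
          Option.some.inj ((getLast?_eq_get h0).symm.trans hwl.2.2)
        have hlen3 : 3 ≤ l.length := by
          by_contra h3
          rcases (by omega : l.length = 1 ∨ l.length = 2) with h1 | h1
          · apply hxy
            rw [← hx0, ← hyl]
            simp only [show l.length - 1 = 0 from by omega]
          · apply hnadj
            rw [← hx0, ← hyl]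
            simp only [show l.length - 1 = 1 from by omega]
            exact List.isChain_iff_getElem.1 hwl.1 0 (by omega)
        refine ⟨l, hwl, hnd, hAl, hlen3, ?_⟩
        intro p q hq hpq h1 h2 hadj
        exact hch ⟨p, q, hq, hpq, ⟨h1, h2⟩, hadj⟩
    · rw [List.nodup_iff_injective_get] at hnd
      unfold Function.Injective at hnd
      push_neg at hnd
      obtain ⟨i, j, heq, hne⟩ := hnd
      rcases lt_or_gt_of_ne (fun hh : i.val = j.val => hne (Fin.ext hh)) with hlt | hlt
      · obtain ⟨l', hwl', hsub, hlen⟩ := shortcut_dup hwl i.val j.val j.isLt hlt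
          (by convert heq <;> simp)
        exact ih l' (by omega) hwl' (fun v hv => hAl v (hsub.subset hv))
      · obtain ⟨l', hwl', hsub, hlen⟩ := shortcut_dup hwl j.val i.val i.isLt hlt
          (by convert heq.symm <;> simp)
        exact ih l' (by omega) hwl' (fun v hv => hAl v (hsub.subset hv))

end Chd

namespace Chd
open List

variable {V : Type} {G : SimpleGraph V}

lemma walk_decomp {x y : V} {l : List V} (h : Walk' G x y l) (h3 : 3 ≤ l.length) :
    ∃ m, m ≠ [] ∧ l = x :: (m ++ [y]) := by
  cases l with
  | nil => simp at h3
  | cons a t =>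
    have hax : a = x := by simpa using h.2.1
    have ht : t ≠ [] := by
      intro hh; rw [hh] at h3; simp at h3
    have hlast : t.getLast ht = y := by
      have h1 := h.2.2
      rw [List.getLast?_eq_getLast (List.cons_ne_nil a t), List.getLast_cons ht] at h1
      exact Option.some.inj h1
    refine ⟨t.dropLast, ?_, ?_⟩
    · intro hh
      have := congrArg List.length hh
      rw [List.length_dropLast] at this
      simp at this
      simp at h3
      omega
    · rw [hax, ← hlast, List.dropLast_append_getLast ht]

lemma adj_of_two_paths (hch : Chordal G) {x y : V} {A B : Set V} (hxy : x ≠ y)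
    (hxA : x ∉ A) (hyA : y ∉ A) (hxB : x ∉ B) (hyB : y ∉ B)
    (hAB : ∀ v, v ∈ A → v ∈ B → False)
    (hnoedge : ∀ u v, u ∈ A → v ∈ B → ¬G.Adj u v)
    (w₁ : ∃ l, Walk' G x y l ∧ ∀ v ∈ l, v ≠ x → v ≠ y → v ∈ A)
    (w₂ : ∃ l, Walk' G y x l ∧ ∀ v ∈ l, v ≠ y → v ≠ x → v ∈ B) :
    G.Adj x y := by
  by_contra hnadj
  obtain ⟨l₁, hw₁, hA₁⟩ := w₁
  obtain ⟨l₁, hw₁, hnd₁, hA₁, hlen₁, hcl₁⟩ := exists_chordless_path hxy hnadj hw₁ hA₁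
  obtain ⟨l₂, hw₂, hB₂⟩ := w₂
  obtain ⟨l₂, hw₂, hnd₂, hB₂, hlen₂, hcl₂⟩ :=
    exists_chordless_path (Ne.symm hxy) (fun hh => hnadj hh.symm) hw₂ hB₂
  obtain ⟨m₁, hm₁ne, hl₁eq⟩ := walk_decomp hw₁ hlen₁
  obtain ⟨m₂, hm₂ne, hl₂eq⟩ := walk_decomp hw₂ hlen₂
  -- memberships
  have hxm₁ : x ∉ m₁ ++ [y] := by
    rw [hl₁eq] at hnd₁; exact (List.nodup_cons.1 hnd₁).1
  have hym₁ : ∀ v ∈ m₁, v ≠ y := by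
    rw [hl₁eq] at hnd₁
    intro v hv hvy
    exact (List.disjoint_of_nodup_append (List.nodup_cons.1 hnd₁).2) hv (by simp [hvy])
  have hm₁A : ∀ v ∈ m₁, v ∈ A := by
    intro v hv
    refine hA₁ v (by rw [hl₁eq]; simp [hv]) ?_ (hym₁ v hv)
    intro hvx; exact hxm₁ (by rw [← hvx]; simp [hv])
  have hym₂ : y ∉ m₂ ++ [x] := by
    rw [hl₂eq] at hnd₂; exact (List.nodup_cons.1 hnd₂).1
  have hxm₂ : ∀ v ∈ m₂, v ≠ x := by
    rw [hl₂eq] at hnd₂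
    intro v hv hvx
    exact (List.disjoint_of_nodup_append (List.nodup_cons.1 hnd₂).2) hv (by simp [hvx])
  have hm₂B : ∀ v ∈ m₂, v ∈ B := by
    intro v hv
    refine hB₂ v (by rw [hl₂eq]; simp [hv]) ?_ (hxm₂ v hv)
    intro hvy; exact hym₂ (by rw [← hvy]; simp [hv])
  set n₁ := m₁.length with hn₁
  set n₂ := m₂.length with hn₂
  have hn₁pos : 0 < n₁ := List.length_pos_iff.mpr hm₁ne
  have hn₂pos : 0 < n₂ := List.length_pos_iff.mpr hm₂ne
  have hl₁len : l₁.length = n₁ + 2 := by rw [hl₁eq]; simp [hn₁]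
  have hl₂len : l₂.length = n₂ + 2 := by rw [hl₂eq]; simp [hn₂]
  set c : List V := (x :: m₁) ++ (y :: m₂) with hc
  have hclen : c.length = n₁ + n₂ + 2 := by rw [hc]; simp <;> omega
  have hl₁eq' : l₁ = (x :: m₁) ++ [y] := by rw [hl₁eq]; simp
  have hl₂eq' : l₂ = (y :: m₂) ++ [x] := by rw [hl₂eq]; simp
  -- getElem relations
  have hgl1 : ∀ (k : ℕ) (hk : k < n₁ + 2), c.get ⟨k, by omega⟩ = l₁.get ⟨k, by omega⟩ := by
    intro k hk
    simp only [List.get_eq_getElem, hc, hl₁eq']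
    rcases Nat.lt_or_ge k (n₁ + 1) with h | h
    · rw [List.getElem_append_left (by simpa using h), List.getElem_append_left (by simpa using h)]
    · have hk' : k = n₁ + 1 := by omega
      subst hk'
      rw [List.getElem_append_right (by simp [hn₁]), List.getElem_append_right (by simp [hn₁])]
      simp [hn₁]
  have hgl2 : ∀ (k : ℕ) (hk : k < n₂ + 1), c.get ⟨n₁ + 1 + k, by omega⟩ = l₂.get ⟨k, by omega⟩ := by
    intro k hk
    simp only [List.get_eq_getElem, hc, hl₂eq']
    rw [List.getElem_append_right (by simp [hn₁]), List.getElem_append_left (by simpa using hk)]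
    congr 1
    simp [hn₁]
  have hgx : l₂.get ⟨n₂ + 1, by omega⟩ = x := by
    simp only [List.get_eq_getElem, hl₂eq']
    rw [List.getElem_append_right (by simp [hn₂])]
    simp [hn₂]
  have hgy : l₂.get ⟨0, by omega⟩ = y := by
    simp only [List.get_eq_getElem, hl₂eq']
    rw [List.getElem_append_left (by simp)]
    simp
  -- cycle properties
  have hcne : c ≠ [] := by rw [hc]; simp
  have hcnd : c.Nodup := by
    rw [hc, List.nodup_append']
    refine ⟨((List.IsPrefix.sublist ⟨[y], hl₁eq'.symm⟩).nodup hnd₁), ((List.IsPrefix.sublist ⟨[x], hl₂eq'.symm⟩).nodup hnd₂), ?_⟩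
    intro v hv1 hv2
    rcases List.mem_cons.1 hv1 with rfl | hv1'
    · rcases List.mem_cons.1 hv2 with h | h
      · exact hxy h
      · exact hxB (hm₂B _ h)
    · rcases List.mem_cons.1 hv2 with rfl | h
      · exact hyA (hm₁A _ hv1')
      · exact hAB _ (hm₁A _ hv1') (hm₂B _ h)
  have hchain : c.IsChain G.Adj := by
    rw [hc]
    refine List.isChain_append.2 ⟨?_, ?_, ?_⟩
    · exact (hl₁eq' ▸ hw₁.1).prefix ⟨[y], rfl⟩
    · exact (hl₂eq' ▸ hw₂.1).prefix ⟨[x], rfl⟩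
    · intro a ha b hb
      have hb' : y = b := by simpa using hb
      have hj := (List.isChain_append.1 (hl₁eq' ▸ hw₁.1)).2.2
      exact hb' ▸ hj a ha y (by simp)
  have hlen4 : 4 ≤ c.length := by omega
  have hcyc : G.Adj (c.getLast hcne) (c.head hcne) := by
    have h1 : c.getLast hcne = (y :: m₂).getLast (List.cons_ne_nil _ _) := by
      have h2 := List.getLast?_append_of_ne_nil (x :: m₁) (l₂ := y :: m₂) (List.cons_ne_nil _ _)
      rw [← hc, List.getLast?_eq_getLast hcne,
        List.getLast?_eq_getLast (List.cons_ne_nil _ _)] at h2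
      exact Option.some.inj h2
    have h2 : c.head hcne = x := by
      have h3 := List.head?_append_of_ne_nil (x :: m₁) (l₂ := y :: m₂) (List.cons_ne_nil _ _)
      rw [← hc, List.head?_eq_head hcne] at h3
      simpa using h3
    rw [h1, h2]
    have hj := (List.isChain_append.1 (hl₂eq' ▸ hw₂.1)).2.2
    refine hj _ ?_ x (by simp)
    rw [List.getLast?_eq_getLast (List.cons_ne_nil _ _)]
    simp
  have hc0 : c.get ⟨0, by omega⟩ = x := by simp [hc, List.get_eq_getElem]
  have hly : l₁.get ⟨n₁ + 1, by omega⟩ = y := by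
    simp only [List.get_eq_getElem, hl₁eq']
    rw [List.getElem_append_right (by simp [hn₁])]
    simp [hn₁]
  have hcy : c.get ⟨n₁ + 1, by omega⟩ = y := by rw [hgl1 (n₁+1) (by omega)]; exact hly
  have hmemA : ∀ (k : ℕ), 1 ≤ k → k ≤ n₁ → ∀ (hh : k < c.length), c.get ⟨k, hh⟩ ∈ A := by
    intro k h1 h2 hh
    obtain ⟨k', rfl⟩ : ∃ k', k = k' + 1 := ⟨k - 1, by omega⟩
    apply hm₁A
    simp only [List.get_eq_getElem, hc]
    rw [List.getElem_append_left (by simp; omega), List.getElem_cons_succ]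
    exact List.getElem_mem _
  have hmemB : ∀ (k : ℕ), 1 ≤ k → k ≤ n₂ → ∀ (hh : k < l₂.length), l₂.get ⟨k, hh⟩ ∈ B := by
    intro k h1 h2 hh
    obtain ⟨k', rfl⟩ : ∃ k', k = k' + 1 := ⟨k - 1, by omega⟩
    apply hm₂B
    simp only [List.get_eq_getElem, hl₂eq']
    rw [List.getElem_append_left (by simp; omega), List.getElem_cons_succ]
    exact List.getElem_mem _
  obtain ⟨p, q, hq, hpq, hq1, hq2, hadj⟩ := chord_of_cycle hch c hlen4 hcnd hchain hcyc
  rcases Nat.lt_or_ge q (n₁ + 2) with hcase1 | hcase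
  · -- both within l₁
    by_cases hpe : p = 0 ∧ q = n₁ + 1
    · apply hnadj
      have h5 := hadj
      simp only [hpe.1, hpe.2] at h5
      rw [hc0, hcy] at h5
      exact h5
    · have h2' : ¬(p = 0 ∧ q = l₁.length - 1) := by
        rw [hl₁len]; intro hcon; exact hpe ⟨hcon.1, by omega⟩
      have e1 := hgl1 p (by omega)
      have e2 := hgl1 q (by omega)
      rw [e1, e2] at hadj
      exact hcl₁ p q (by omega) hpq hq1 h2' hadj
  · rcases Nat.lt_or_ge p (n₁ + 1) with hcase2 | hcase3
    · -- p in first part, q in second part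
      have e2 := hgl2 (q - (n₁+1)) (by omega)
      simp only [show n₁ + 1 + (q - (n₁+1)) = q from by omega] at e2
      rcases Nat.eq_zero_or_pos p with rfl | hppos
      · -- chord from x into interior of l₂
        have hqne : q ≠ c.length - 1 := fun hh => hq2 ⟨rfl, hh⟩
        rw [hc0, e2] at hadj
        refine hcl₂ (q - (n₁+1)) (n₂ + 1) (by omega) (by omega) (by omega)
          (by rw [hl₂len]; omega) ?_
        rw [hgx]
        exact hadj.symm
      · -- edge between A and B
        have hBq : c.get ⟨q, hq⟩ ∈ B := by
          rw [e2]; exact hmemB (q - (n₁+1)) (by omega) (by omega) (by omega)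
        exact hnoedge _ _ (hmemA p (by omega) (by omega) (by omega)) hBq hadj
    · -- both within l₂
      have e1 := hgl2 (p - (n₁+1)) (by omega)
      have e2 := hgl2 (q - (n₁+1)) (by omega)
      simp only [show n₁ + 1 + (p - (n₁+1)) = p from by omega] at e1
      simp only [show n₁ + 1 + (q - (n₁+1)) = q from by omega] at e2
      rw [e1, e2] at hadj
      exact hcl₂ (p - (n₁+1)) (q - (n₁+1)) (by omega) (by omega) (by omega)
        (by rw [hl₂len]; omega) hadj

end Chd

namespace Chd
open List

variable {V : Type} {G : SimpleGraph V}

def Rch (G : SimpleGraph V) (K : Set V) (a v : V) : Prop :=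
  ∃ l, Walk' G a v l ∧ ∀ w ∈ l, w ∈ K

lemma Rch.single {K : Set V} {a : V} (ha : a ∈ K) : Rch G K a a :=
  ⟨[a], Walk'.single a, by simpa⟩

lemma Rch.mem_K {K : Set V} {a v : V} (h : Rch G K a v) : v ∈ K := by
  obtain ⟨l, hw, hK⟩ := h
  exact hK v hw.last_mem

lemma Rch.step {K : Set V} {a u w : V} (h : Rch G K a u) (hadj : G.Adj u w) (hw : w ∈ K) :
    Rch G K a w := by
  obtain ⟨l, hwl, hK⟩ := h
  have h2 : Walk' G u w [u, w] := ⟨List.isChain_pair.2 hadj, rfl, rfl⟩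
  obtain ⟨hwj, hmem⟩ := hwl.join h2
  refine ⟨_, hwj, ?_⟩
  intro z hz
  rcases hmem z hz with h | h
  · exact hK z h
  · rcases List.mem_cons.1 h with rfl | h'
    · exact hK z hwl.last_mem
    · have : z = w := by simpa using h'
      exact this ▸ hw

lemma rch_all {K : Set V} {a v : V} {l : List V} (hw : Walk' G a v l)
    (hK : ∀ w ∈ l, w ∈ K) : ∀ u ∈ l, Rch G K a u := by
  intro u hu
  obtain ⟨l₁, l₂, heq, -, hpre, -⟩ := hw.split hu
  refine ⟨l₁ ++ [u], hpre, ?_⟩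
  intro w hw'
  apply hK
  rw [heq]
  rcases List.mem_append.1 hw' with h | h
  · exact List.mem_append.2 (Or.inl h)
  · have : w = u := by simpa using h
    subst this
    simp

lemma touch {K : Set V} {a c x : V} {l : List V} (hw : Walk' G a c l) (hx : x ∈ l)
    (hK : ∀ w ∈ l, w ≠ x → w ∈ K) (hax : x ≠ a) :
    ∃ t, Walk' G x a t ∧ ∀ w ∈ t, w ≠ x → Rch G K a w := by
  obtain ⟨l₁, l₂, heq, hxnot, hpre, -⟩ := hw.split hx
  have hl₁ne : l₁ ≠ [] := by
    rintro rfl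
    have h1 := hw.2.1
    rw [heq] at h1
    simp at h1
    exact hax h1
  have hWl₁ : Walk' G a (l₁.getLast hl₁ne) l₁ := by
    refine ⟨hw.1.prefix ⟨x :: l₂, heq.symm⟩, ?_, List.getLast?_eq_getLast hl₁ne⟩
    have h1 := hw.2.1
    rw [heq, List.head?_append_of_ne_nil _ hl₁ne] at h1
    exact h1
  have hKl₁ : ∀ w ∈ l₁, w ∈ K := fun w hw' =>
    hK w (by rw [heq]; exact List.mem_append.2 (Or.inl hw')) (fun hh => hxnot (hh ▸ hw'))
  have hrch := rch_all hWl₁ hKl₁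
  refine ⟨(l₁ ++ [x]).reverse, hpre.rev, ?_⟩
  intro w hwm hwx
  rw [List.mem_reverse] at hwm
  rcases List.mem_append.1 hwm with h | h
  · exact hrch w h
  · exact absurd (by simpa using h) hwx

def SimpIn (G : SimpleGraph V) (s : Finset V) (v : V) : Prop :=
  ∀ u ∈ s, ∀ w ∈ s, G.Adj u v → G.Adj w v → u ≠ w → G.Adj u w

theorem key [DecidableEq V] (hch : Chordal G) : ∀ (n : ℕ) (s : Finset V), s.card ≤ n →
    (∀ u ∈ s, ∀ v ∈ s, u ≠ v → G.Adj u v) ∨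
    ∃ u ∈ s, ∃ v ∈ s, ¬G.Adj u v ∧ u ≠ v ∧ SimpIn G s u ∧ SimpIn G s v := by
  intro n
  induction n with
  | zero =>
    intro s hs
    left
    intro u hu
    have hse : s = ∅ := Finset.card_eq_zero.mp (by omega)
    subst hse
    simp at hu
  | succ n ih =>
    intro s hs
    by_cases hcomp : ∀ u ∈ s, ∀ v ∈ s, u ≠ v → G.Adj u v
    · exact Or.inl hcomp
    right
    push_neg at hcomp
    obtain ⟨a, ha, b, hb, hab, hnadj⟩ := hcomp
    classical
    -- a separator exists
    have hsep₀ : ∃ T : Finset V, (T ⊆ s ∧ a ∉ T ∧ b ∉ T) ∧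
        ∀ l, Walk' G a b l → (∀ w ∈ l, w ∈ s) → ∃ w ∈ l, w ∈ T := by
      refine ⟨(s.erase a).erase b, ⟨((s.erase a).erase_subset b).trans (s.erase_subset a),
        fun h => (Finset.notMem_erase a s) (Finset.mem_of_mem_erase h),
        Finset.notMem_erase b _⟩, ?_⟩
      intro l hwl hls
      by_contra hno
      push_neg at hno
      have h0 : 0 < l.length := List.length_pos_iff.mpr hwl.ne_nil
      have hx0 : l.get ⟨0, h0⟩ = a :=
        Option.some.inj ((head?_eq_get h0).symm.trans hwl.2.1)
      have hxl : l.get ⟨l.length - 1, by omega⟩ = b :=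
        Option.some.inj ((getLast?_eq_get h0).symm.trans hwl.2.2)
      have hlen2 : 2 ≤ l.length := by
        by_contra hc
        have h1 : l.length = 1 := by omega
        apply hab
        rw [← hx0, ← hxl]
        simp only [show l.length - 1 = 0 from by omega]
      have hz : G.Adj (l.get ⟨0, h0⟩) (l.get ⟨1, by omega⟩) := List.isChain_iff_getElem.1 hwl.1 0 (by omega)
      set z := l.get ⟨1, by omega⟩ with hzdef
      have hzmem : z ∈ l := by rw [hzdef]; exact List.get_mem l ⟨1, by omega⟩
      have hzs : z ∈ s := hls z hzmem
      have hznot := hno z hzmem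
      rw [Finset.mem_erase, Finset.mem_erase] at hznot
      push_neg at hznot
      rcases (by tauto : z = a ∨ z = b) with h | h
      · rw [hx0, h] at hz
        exact G.loopless.irrefl a hz
      · rw [hx0, h] at hz
        exact hnadj hz
    -- choose a minimum-cardinality separator
    have hexm : ∃ m : ℕ, ∃ T : Finset V, ((T ⊆ s ∧ a ∉ T ∧ b ∉ T) ∧
        ∀ l, Walk' G a b l → (∀ w ∈ l, w ∈ s) → ∃ w ∈ l, w ∈ T) ∧ T.card = m := by
      obtain ⟨T, h1, h2⟩ := hsep₀
      exact ⟨T.card, T, ⟨h1, h2⟩, rfl⟩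
    obtain ⟨S, ⟨⟨hSsub, haS, hbS⟩, hsep⟩, hScard⟩ := Nat.find_spec hexm
    have hminS : ∀ T : Finset V, ((T ⊆ s ∧ a ∉ T ∧ b ∉ T) ∧
        ∀ l, Walk' G a b l → (∀ w ∈ l, w ∈ s) → ∃ w ∈ l, w ∈ T) → S.card ≤ T.card := by
      intro T hT
      rw [hScard]
      exact Nat.find_min' hexm ⟨T, hT, rfl⟩
    set K : Set V := {v | v ∈ s ∧ v ∉ S} with hK
    have hsepb : ∀ l, Walk' G b a l → (∀ w ∈ l, w ∈ s) → ∃ w ∈ l, w ∈ S := by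
      intro l hwl hls
      obtain ⟨w, hw, hwS⟩ := hsep l.reverse hwl.rev (fun w hw => hls w (List.mem_reverse.1 hw))
      exact ⟨w, List.mem_reverse.1 hw, hwS⟩
    have F3 : ∀ v, Rch G K a v → Rch G K b v → False := by
      rintro v ⟨la, hwa, hka⟩ ⟨lb, hwb, hkb⟩
      obtain ⟨hwj, hmem⟩ := hwa.join hwb.rev
      obtain ⟨w, hwmem, hwS⟩ := hsep _ hwj (fun w hw => by
        rcases hmem w hw with h | h
        · exact (hka w h).1
        · exact (hkb w (List.mem_reverse.1 h)).1)
      rcases hmem w hwmem with h | h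
      · exact (hka w h).2 hwS
      · exact (hkb w (List.mem_reverse.1 h)).2 hwS
    have F4 : ∀ u v, Rch G K a u → Rch G K b v → ¬G.Adj u v := by
      intro u v h1 h2 hadj
      exact F3 v (h1.step hadj h2.mem_K) h2
    -- every x in S has a walk to a with interior in the a-side, similarly for b
    have hmin : ∀ x ∈ S, ∃ l, Walk' G a b l ∧ (∀ w ∈ l, w ∈ s) ∧
        ∀ w ∈ l, w ∈ S → w = x := by
      intro x hx
      have hcard_er : (S.erase x).card < S.card := Finset.card_erase_lt_of_mem hx
      have hnot : ¬(∀ l, Walk' G a b l → (∀ w ∈ l, w ∈ s) → ∃ w ∈ l, w ∈ S.erase x) := by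
        intro hsep'
        have := hminS (S.erase x) ⟨⟨(S.erase_subset x).trans hSsub,
          fun h => haS (Finset.mem_of_mem_erase h),
          fun h => hbS (Finset.mem_of_mem_erase h)⟩, hsep'⟩
        omega
      push_neg at hnot
      obtain ⟨l, hwl, hls, hforall⟩ := hnot
      refine ⟨l, hwl, hls, ?_⟩
      intro w hwmem hwS
      have hforw := hforall w hwmem
      rw [Finset.mem_erase] at hforw
      push_neg at hforw
      by_contra hne
      exact hforw hne hwS
    have htouch : ∀ x ∈ S, (∃ t, Walk' G x a t ∧ ∀ w ∈ t, w ≠ x → Rch G K a w) ∧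
        (∃ t, Walk' G x b t ∧ ∀ w ∈ t, w ≠ x → Rch G K b w) := by
      intro x hxS
      obtain ⟨l, hwl, hls, honly⟩ := hmin x hxS
      obtain ⟨w, hwmem, hwS⟩ := hsep l hwl hls
      have hxmem : x ∈ l := (honly w hwmem hwS) ▸ hwmem
      have hKx : ∀ w ∈ l, w ≠ x → w ∈ K :=
        fun w hw hne => ⟨hls w hw, fun hS => hne (honly w hw hS)⟩
      constructor
      · exact touch hwl hxmem hKx (fun h => haS (h ▸ hxS))
      · refine touch hwl.rev (List.mem_reverse.2 hxmem)
          (fun w hw hne => hKx w (List.mem_reverse.1 hw) hne) (fun h => hbS (h ▸ hxS))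
    have hSclq : ∀ x ∈ S, ∀ y ∈ S, x ≠ y → G.Adj x y := by
      intro x hxS y hyS hxyne
      obtain ⟨⟨tx, hwtx, htxA⟩, ⟨tx', hwtx', htxB⟩⟩ := htouch x hxS
      obtain ⟨⟨ty, hwty, htyA⟩, ⟨ty', hwty', htyB⟩⟩ := htouch y hyS
      refine adj_of_two_paths hch hxyne
        (fun h => (Rch.mem_K h).2 hxS) (fun h => (Rch.mem_K h).2 hyS)
        (fun h => (Rch.mem_K h).2 hxS) (fun h => (Rch.mem_K h).2 hyS)
        (fun v h1 h2 => F3 v h1 h2) (fun u v h1 h2 => F4 u v h1 h2) ?_ ?_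
      · obtain ⟨hwj, hmem⟩ := hwtx.join hwty.rev
        refine ⟨_, hwj, ?_⟩
        intro v hv hvx hvy
        rcases hmem v hv with h | h
        · exact htxA v h hvx
        · exact htyA v (List.mem_reverse.1 h) hvy
      · obtain ⟨hwj, hmem⟩ := hwty'.join hwtx'.rev
        refine ⟨_, hwj, ?_⟩
        intro v hv hvy hvx
        rcases hmem v hv with h | h
        · exact htyB v h hvy
        · exact htxB v (List.mem_reverse.1 h) hvx
    -- find a simplicial vertex on each side
    have side : ∀ c d : V, c ∈ s → d ∈ s → c ∉ S → d ∉ S →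
        (∀ l, Walk' G c d l → (∀ w ∈ l, w ∈ s) → ∃ w ∈ l, w ∈ S) →
        ∃ u, u ∈ s ∧ Rch G K c u ∧ SimpIn G s u := by
      intro c d hcs hds hcS hdS hsepcd
      have hcK : c ∈ K := ⟨hcs, hcS⟩
      set sA : Finset V := s.filter (fun v => Rch G K c v) with hsA
      set s' : Finset V := sA ∪ S with hs'
      have hsub' : s' ⊆ s := by
        intro v hv
        rcases Finset.mem_union.1 hv with h | h
        · exact (Finset.mem_filter.1 h).1
        · exact hSsub h
      have hds' : d ∉ s' := by
        intro hv
        rcases Finset.mem_union.1 hv with h | h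
        · obtain ⟨-, hrch⟩ := Finset.mem_filter.1 h
          obtain ⟨l, hwl, hKl⟩ := hrch
          obtain ⟨w, hw, hwS⟩ := hsepcd l hwl (fun w hw => (hKl w hw).1)
          exact (hKl w hw).2 hwS
        · exact hdS h
      have hcard' : s'.card ≤ n := by
        have h1 : s'.card < s.card := by
          apply Finset.card_lt_card
          rw [Finset.ssubset_def]
          exact ⟨hsub', fun hss => hds' (hss hds)⟩
        omega
      have hnbr : ∀ u, Rch G K c u → ∀ w ∈ s, G.Adj w u → w ∈ s' := by
        intro u hu w hws hadj
        by_cases hwS : w ∈ S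
        · exact Finset.mem_union.2 (Or.inr hwS)
        · exact Finset.mem_union.2 (Or.inl (Finset.mem_filter.2 ⟨hws,
            hu.step hadj.symm ⟨hws, hwS⟩⟩))
      have hlift : ∀ u, u ∈ s → Rch G K c u → SimpIn G s' u → SimpIn G s u := by
        intro u hus hrch hsimp p hp q hq h1 h2 hne
        exact hsimp p (hnbr u hrch p hp h1) q (hnbr u hrch q hq h2) h1 h2 hne
      rcases ih s' hcard' with hcomplete | htwo
      · refine ⟨c, hcs, Rch.single hcK, ?_⟩
        apply hlift c hcs (Rch.single hcK)
        intro p hp q hq h1 h2 hne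
        exact hcomplete p hp q hq hne
      · obtain ⟨u, hu, v, hv, huv, hune, hsu, hsv⟩ := htwo
        by_cases huS : u ∈ S
        · have hvS : v ∉ S := fun hvS => huv (hSclq u huS v hvS hune)
          have hvf : v ∈ sA := by
            rcases Finset.mem_union.1 hv with h | h
            · exact h
            · exact absurd h hvS
          obtain ⟨hvs, hvrch⟩ := Finset.mem_filter.1 hvf
          exact ⟨v, hvs, hvrch, hlift v hvs hvrch hsv⟩
        · have huf : u ∈ sA := by
            rcases Finset.mem_union.1 hu with h | h
            · exact h
            · exact absurd h huS
          obtain ⟨hus, hurch⟩ := Finset.mem_filter.1 huf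
          exact ⟨u, hus, hurch, hlift u hus hurch hsu⟩
    obtain ⟨uA, huAs, huArch, huAsimp⟩ := side a b ha hb haS hbS hsep
    obtain ⟨uB, huBs, huBrch, huBsimp⟩ := side b a hb ha hbS haS hsepb
    refine ⟨uA, huAs, uB, huBs, F4 uA uB huArch huBrch, ?_, huAsimp, huBsimp⟩
    intro hh
    exact F3 uA huArch (hh ▸ huBrch)

end Chd

namespace Chd
open List

variable {V : Type} {G : SimpleGraph V}

lemma simp_exists [DecidableEq V] (hch : Chordal G) (s : Finset V) (hs : s.Nonempty) :
    ∃ v ∈ s, SimpIn G s v := by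
  rcases key hch s.card s le_rfl with hcomp | ⟨u, hu, v, hv, -, -, hsu, -⟩
  · obtain ⟨v, hv⟩ := hs
    exact ⟨v, hv, fun u hu w hw _ _ hne => hcomp u hu w hw hne⟩
  · exact ⟨u, hu, hsu⟩

theorem peo [DecidableEq V] (hch : Chordal G) : ∀ (n : ℕ) (s : Finset V), s.card ≤ n →
    ∃ ρ : V → ℕ, (∀ u ∈ s, ρ u < s.card) ∧ (∀ u ∈ s, ∀ v ∈ s, ρ u = ρ v → u = v) ∧
      (∀ u ∈ s, ∀ w ∈ s, ∀ v ∈ s, ρ u < ρ v → ρ w < ρ v →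
        G.Adj u v → G.Adj w v → u ≠ w → G.Adj u w) := by
  intro n
  induction n with
  | zero =>
    intro s hs
    have hse : s = ∅ := Finset.card_eq_zero.mp (by omega)
    subst hse
    exact ⟨fun _ => 0, by simp, by simp, by simp⟩
  | succ n ih =>
    intro s hs
    rcases s.eq_empty_or_nonempty with rfl | hne
    · exact ⟨fun _ => 0, by simp, by simp, by simp⟩
    obtain ⟨v, hv, hsimp⟩ := simp_exists hch s hne
    have hcard' : (s.erase v).card = s.card - 1 := Finset.card_erase_of_mem hv
    have hcardpos : 0 < s.card := Finset.card_pos.2 hne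
    obtain ⟨ρ', h1', h2', h3'⟩ := ih (s.erase v) (by omega)
    set ρ : V → ℕ := fun u => if u = v then s.card - 1 else ρ' u with hρdef
    have hρv : ρ v = s.card - 1 := by simp [hρdef]
    have hρne : ∀ u, u ≠ v → ρ u = ρ' u := fun u h => by simp [hρdef, h]
    have hmem' : ∀ u, u ∈ s → u ≠ v → u ∈ s.erase v :=
      fun u hu h => Finset.mem_erase.2 ⟨h, hu⟩
    have hbnd : ∀ u, u ∈ s → u ≠ v → ρ u < s.card - 1 := by
      intro u hu h
      rw [hρne u h]
      have := h1' u (hmem' u hu h)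
      omega
    refine ⟨ρ, ?_, ?_, ?_⟩
    · intro u hu
      by_cases h : u = v
      · rw [h, hρv]; omega
      · have := hbnd u hu h; omega
    · intro u hu w hw heq
      by_cases hu' : u = v <;> by_cases hw' : w = v
      · rw [hu', hw']
      · exfalso; rw [hu', hρv] at heq; have := hbnd w hw hw'; omega
      · exfalso; rw [hw', hρv] at heq; have := hbnd u hu hu'; omega
      · exact h2' u (hmem' u hu hu') w (hmem' w hw hw')
          (by rw [← hρne u hu', ← hρne w hw', heq])
    · intro u hu w hw x hx hlt1 hlt2 hadj1 hadj2 hne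
      by_cases hx' : x = v
      · exact hsimp u hu w hw (hx' ▸ hadj1) (hx' ▸ hadj2) hne
      · have hxbnd := hbnd x hx hx'
        have hu' : u ≠ v := by
          intro hh; rw [hh, hρv] at hlt1; omega
        have hw' : w ≠ v := by
          intro hh; rw [hh, hρv] at hlt2; omega
        refine h3' u (hmem' u hu hu') w (hmem' w hw hw') x (hmem' x hx hx') ?_ ?_ hadj1 hadj2 hne
        · rw [← hρne u hu', ← hρne x hx']; exact hlt1
        · rw [← hρne w hw', ← hρne x hx']; exact hlt2

end Chd

theorem stmt10 (V : Type) (G : SimpleGraph V)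
    (hwo : ∃ r : V → V → Prop, IsWellOrder V r) (hch : Chordal G) :
    ∃ r : V → V → Prop, IsStrictTotalOrder V r ∧
      ∀ v : V, G.IsClique {w | r w v ∧ G.Adj w v} := by
  classical
  have hex : ∀ s : Finset V, ∃ ρ : V → ℕ,
      (∀ u ∈ s, ∀ v ∈ s, ρ u = ρ v → u = v) ∧
      (∀ u ∈ s, ∀ w ∈ s, ∀ v ∈ s, ρ u < ρ v → ρ w < ρ v →
        G.Adj u v → G.Adj w v → u ≠ w → G.Adj u w) := by
    intro s
    obtain ⟨ρ, _, h2, h3⟩ := Chd.peo hch s.card s le_rfl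
    exact ⟨ρ, h2, h3⟩
  choose ρ hinj hpeo using hex
  haveI : Nonempty (Finset V) := ⟨∅⟩
  set U : Ultrafilter (Finset V) := Ultrafilter.of Filter.atTop with hU
  have hUatTop : ∀ s₀ : Finset V, {t : Finset V | s₀ ⊆ t} ∈ U :=
    fun s₀ => Ultrafilter.of_le Filter.atTop (Filter.mem_atTop s₀)
  set r : V → V → Prop := fun u v => {t : Finset V | u ∈ t ∧ v ∈ t ∧ ρ t u < ρ t v} ∈ U
    with hr
  have hirr : ∀ u, ¬ r u u := by
    intro u hu
    obtain ⟨t, -, -, hlt⟩ := Filter.nonempty_of_mem hu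
    exact lt_irrefl _ hlt
  have htrans : ∀ u v w, r u v → r v w → r u w := by
    intro u v w h1 h2
    refine Filter.mem_of_superset (Filter.inter_mem h1 h2) ?_
    rintro t ⟨⟨hu, hv, hlt1⟩, ⟨-, hw, hlt2⟩⟩
    exact ⟨hu, hw, hlt1.trans hlt2⟩
  have htri : ∀ u v, u ≠ v → r u v ∨ r v u := by
    intro u v huv
    have hsub : {t : Finset V | ({u, v} : Finset V) ⊆ t} ⊆
        {t : Finset V | u ∈ t ∧ v ∈ t ∧ ρ t u < ρ t v} ∪
        {t : Finset V | v ∈ t ∧ u ∈ t ∧ ρ t v < ρ t u} := by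
      intro t ht
      have hut : u ∈ t := ht (by simp)
      have hvt : v ∈ t := ht (by simp)
      rcases lt_trichotomy (ρ t u) (ρ t v) with h | h | h
      · exact Or.inl ⟨hut, hvt, h⟩
      · exact absurd (hinj t u hut v hvt h) huv
      · exact Or.inr ⟨hvt, hut, h⟩
    exact (Ultrafilter.union_mem_iff).1 (Filter.mem_of_superset (hUatTop {u, v}) hsub)
  haveI htri' : IsTrichotomous V r := ⟨by
    intro a b h1' h2'
    by_contra h
    rcases htri a b h with h1 | h1
    · exact h1' h1
    · exact h2' h1⟩
  haveI hirr' : IsIrrefl V r := ⟨hirr⟩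
  haveI htrans' : IsTrans V r := ⟨htrans⟩
  haveI : IsStrictOrder V r := { }
  refine ⟨r, { }, ?_⟩
  intro v
  rw [SimpleGraph.isClique_iff]
  rintro u ⟨hru, hadju⟩ w ⟨hrw, hadjw⟩ hne
  obtain ⟨t, ⟨hut, hvt, hlt1⟩, ⟨hwt, -, hlt2⟩⟩ :=
    Filter.nonempty_of_mem (Filter.inter_mem hru hrw)
  exact hpeo t u hut w hwt v hvt hlt1 hlt2 hadju hadjw hne
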